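/- With g(t_{00},t_{10},t_{01},t_{11}) = (t_{00}+t_{10})(t_{00}+t_{01}) - t_{00}, the number of reduced 3×n Latin rectangles satisfies R_3(n) = Σ_{s_{00}+s_{10}+s_{01}+s_{11}=n} (-1)^{s_{10}+s_{01}+2 s_{11}} · multinomial(n; s_{00},s_{10},s_{01},s_{11}) · g(s_{00}-1,s_{10},s_{01},s_{11}+1)^{s_{00}} · g(s_{00},s_{10}-1,s_{01},s_{11}+1)^{s_{10}} · g(s_{00},s_{10},s_{01}-1,s_{11}+1)^{s_{01}} · g(s_{00},s_{10},s_{01},s_{11})^{s_{11}}, where the sum ranges over nonnegative integers summing to n. -/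

import Mathlib

def IsLatin {k n : ℕ} (A : Fin k → Fin n → Fin n) : Prop :=
  (∀ i, Function.Injective (A i)) ∧ (∀ j, Function.Injective fun i => A i j)

def g (a b c d : ℤ) : ℤ := (a + b) * (a + c) - a

open Finset

section Helpers

variable {β : Type*} [Fintype β] [DecidableEq β]

omit [Fintype β] in
lemma RTL.inter_card_le_mul (A B : Finset β) : (A ∩ B).card ≤ A.card * B.card := by
  rcases Nat.eq_zero_or_pos A.card with h | h
  · rw [Finset.card_eq_zero] at h
    simp [h]
  · calc (A ∩ B).card ≤ B.card := Finset.card_le_card Finset.inter_subset_right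
      _ = 1 * B.card := (one_mul _).symm
      _ ≤ A.card * B.card := Nat.mul_le_mul_right _ h

lemma RTL.card_pairs (A B : Finset β) :
    (univ.filter fun z : β × β => z.1 ∈ A ∧ z.2 ∈ B ∧ z.2 ≠ z.1).card
      = A.card * B.card - (A ∩ B).card := by
  have hset : (univ.filter fun z : β × β => z.1 ∈ A ∧ z.2 ∈ B ∧ z.2 ≠ z.1)
      = (A ×ˢ B) \ ((A ∩ B).image fun x => (x, x)) := by
    ext ⟨x, y⟩
    simp only [mem_filter, mem_univ, true_and, mem_sdiff, mem_product, mem_image, mem_inter,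
      Prod.mk.injEq]
    constructor
    · rintro ⟨hx, hy, hne⟩
      exact ⟨⟨hx, hy⟩, fun ⟨w, ⟨_, _⟩, hw1, hw2⟩ => hne (hw2 ▸ hw1 ▸ rfl)⟩
    · rintro ⟨⟨hx, hy⟩, hne⟩
      refine ⟨hx, hy, fun h => hne ⟨x, ⟨hx, h ▸ hy⟩, rfl, h.symm⟩⟩
  rw [hset, card_sdiff_of_subset, card_product,
    Finset.card_image_of_injective _ fun a b h => (Prod.mk.injEq _ _ _ _ ▸ h).1]
  · rintro z hz
    simp only [mem_image, mem_inter] at hz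
    obtain ⟨w, ⟨hw1, hw2⟩, rfl⟩ := hz
    simp [mem_product, hw1, hw2]

lemma RTL.card_pair_fun {α : Type*} [Fintype α] [DecidableEq α] (P : α → β → β → Prop)
    [∀ i x y, Decidable (P i x y)] :
    (univ.filter fun p : (α → β) × (α → β) => ∀ i, P i (p.1 i) (p.2 i)).card
      = ∏ i, (univ.filter fun z : β × β => P i z.1 z.2).card := by
  classical
  rw [← Fintype.card_subtype]
  have e1 : {p : (α → β) × (α → β) // ∀ i, P i (p.1 i) (p.2 i)}
      ≃ {h : α → β × β // ∀ i, P i (h i).1 (h i).2} :=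
    (Equiv.arrowProdEquivProdArrow α (fun _ => β) (fun _ => β)).symm.subtypeEquiv fun h => by
      simp [Equiv.arrowProdEquivProdArrow]
  have e2 : {h : α → β × β // ∀ i, P i (h i).1 (h i).2}
      ≃ ∀ i, {z : β × β // P i z.1 z.2} :=
    Equiv.subtypePiEquivPi (p := fun i (z : β × β) => P i z.1 z.2)
  rw [Fintype.card_congr (e1.trans e2), Fintype.card_pi]
  exact Finset.prod_congr rfl fun i _ => Fintype.card_subtype _

lemma RTL.card_T2 (T1 : Finset β) (b c : ℕ) :
    (univ.filter fun T2 : Finset β =>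
        (T1 \ T2).card = T1.card - c ∧ (T2 \ T1).card = b ∧ (T1 ∩ T2).card = c).card
      = T1.card.choose c * (Fintype.card β - T1.card).choose b := by
  classical
  rw [← Finset.card_compl (s := T1), ← Finset.card_powersetCard, ← Finset.card_powersetCard,
    ← Finset.card_product]
  apply Finset.card_nbij' (i := fun T2 => (T1 ∩ T2, T2 \ T1))
    (j := fun z => z.1 ∪ z.2)
  · intro T2 hT2
    simp only [mem_coe, mem_filter, mem_univ, true_and] at hT2
    simp only [mem_coe, mem_product, mem_powersetCard]
    refine ⟨⟨Finset.inter_subset_left, hT2.2.2⟩, ⟨?_, hT2.2.1⟩⟩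
    · intro x hx
      simp only [mem_sdiff] at hx
      simpa [Finset.card_compl, mem_compl] using hx.2
  · rintro ⟨U, V⟩ hUV
    simp only [mem_coe, mem_product, mem_powersetCard] at hUV
    obtain ⟨⟨hU, hUc⟩, hV, hVc⟩ := hUV
    have hVT1 : ∀ x ∈ V, x ∉ T1 := fun x hx => by simpa using hV hx
    simp only [mem_coe, mem_filter, mem_univ, true_and]
    have h1 : T1 ∩ (U ∪ V) = U := by
      ext x; simp only [mem_inter, mem_union]
      constructor
      · rintro ⟨hx1, hx2 | hx2⟩
        · exact hx2
        · exact absurd hx1 (hVT1 x hx2)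
      · exact fun hx => ⟨hU hx, Or.inl hx⟩
    have h2 : (U ∪ V) \ T1 = V := by
      ext x; simp only [mem_sdiff, mem_union]
      constructor
      · rintro ⟨hx1 | hx1, hx2⟩
        · exact absurd (hU hx1) hx2
        · exact hx1
      · exact fun hx => ⟨Or.inr hx, hVT1 x hx⟩
    have h3 : T1 \ (U ∪ V) = T1 \ U := by
      ext x; simp only [mem_sdiff, mem_union]
      constructor
      · rintro ⟨hx1, hx2⟩; exact ⟨hx1, fun h => hx2 (Or.inl h)⟩
      · rintro ⟨hx1, hx2⟩; exact ⟨hx1, fun h => h.elim hx2 (fun h' => hVT1 x h' hx1)⟩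
    rw [h1, h2, h3]
    refine ⟨?_, hVc, hUc⟩
    rw [Finset.card_sdiff_of_subset hU, hUc]
  · intro T2 hT2
    ext x
    simp only [mem_union, mem_inter, mem_sdiff]
    by_cases hx : x ∈ T1 <;> simp [hx]
  · rintro ⟨U, V⟩ hUV
    simp only [mem_coe, mem_product, mem_powersetCard] at hUV
    obtain ⟨⟨hU, _⟩, hV, _⟩ := hUV
    have hVT1 : ∀ x ∈ V, x ∉ T1 := fun x hx => by simpa using hV hx
    have h1 : T1 ∩ (U ∪ V) = U := by
      ext x; simp only [mem_inter, mem_union]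
      constructor
      · rintro ⟨hx1, hx2 | hx2⟩
        · exact hx2
        · exact absurd hx1 (hVT1 x hx2)
      · exact fun hx => ⟨hU hx, Or.inl hx⟩
    have h2 : (U ∪ V) \ T1 = V := by
      ext x; simp only [mem_sdiff, mem_union]
      constructor
      · rintro ⟨hx1 | hx1, hx2⟩
        · exact absurd (hU hx1) hx2
        · exact hx1
      · exact fun hx => ⟨Or.inr hx, hVT1 x hx⟩
    simp [h1, h2]

omit [Fintype β] [DecidableEq β] in
lemma RTL.card_filter_prod [Fintype β] (Q : Finset β × Finset β → Prop) [DecidablePred Q]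
    [DecidableEq β] :
    (univ.filter Q).card = ∑ T1 : Finset β, (univ.filter fun T2 => Q (T1, T2)).card := by
  classical
  rw [Finset.card_filter, Fintype.sum_prod_type]
  exact Finset.sum_congr rfl fun T1 _ => (Finset.card_filter _ _).symm

lemma RTL.fiber_count (a b c : ℕ) :
    (univ.filter fun x : Finset β × Finset β =>
        (x.1 \ x.2).card = a ∧ (x.2 \ x.1).card = b ∧ (x.1 ∩ x.2).card = c).card
      = (Fintype.card β).choose (a + c) *
          ((a + c).choose c * (Fintype.card β - (a + c)).choose b) := by
  classical
  rw [RTL.card_filter_prod]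
  have key : ∀ T1 : Finset β,
      (univ.filter fun T2 : Finset β =>
        (T1 \ T2).card = a ∧ (T2 \ T1).card = b ∧ (T1 ∩ T2).card = c).card
      = if T1.card = a + c then (a + c).choose c * (Fintype.card β - (a + c)).choose b else 0 := by
    intro T1
    by_cases hT1 : T1.card = a + c
    · rw [if_pos hT1]
      have heq : (univ.filter fun T2 : Finset β =>
          (T1 \ T2).card = a ∧ (T2 \ T1).card = b ∧ (T1 ∩ T2).card = c)
        = (univ.filter fun T2 : Finset β =>
          (T1 \ T2).card = T1.card - c ∧ (T2 \ T1).card = b ∧ (T1 ∩ T2).card = c) := by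
        apply Finset.filter_congr
        intro T2 _
        have : T1.card - c = a := by omega
        rw [this]
      rw [heq, RTL.card_T2, hT1]
    · rw [if_neg hT1]
      rw [Finset.card_eq_zero, Finset.filter_eq_empty_iff]
      intro T2 _
      rintro ⟨h1, _, h3⟩
      apply hT1
      have := Finset.card_inter_add_card_sdiff T1 T2
      omega
  rw [Finset.sum_congr rfl fun T1 _ => key T1, Finset.sum_ite, Finset.sum_const_zero, add_zero,
    Finset.sum_const, smul_eq_mul]
  have : (univ.filter fun T1 : Finset β => T1.card = a + c) = Finset.powersetCard (a + c) univ := by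
    ext T; simp [Finset.mem_powersetCard]
  rw [this, Finset.card_powersetCard, Finset.card_univ]

lemma RTL.mult_eq_choose (s : Fin 4 → ℕ) :
    Nat.multinomial (univ : Finset (Fin 4)) s
      = (s 0 + s 1 + s 2 + s 3).choose (s 1 + s 3) *
          ((s 1 + s 3).choose (s 3) * ((s 0 + s 2).choose (s 2))) := by
  have hspec := Nat.multinomial_spec (univ : Finset (Fin 4)) s
  rw [Fin.prod_univ_four, Fin.sum_univ_four] at hspec
  have h1 : (s 1 + s 3).choose (s 3) * (s 3).factorial * (s 1).factorial
      = (s 1 + s 3).factorial := by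
    have := Nat.choose_mul_factorial_mul_factorial (Nat.le_add_left (s 3) (s 1))
    simpa using this
  have h2 : (s 0 + s 2).choose (s 2) * (s 2).factorial * (s 0).factorial
      = (s 0 + s 2).factorial := by
    have := Nat.choose_mul_factorial_mul_factorial (Nat.le_add_left (s 2) (s 0))
    simpa using this
  have h3 : (s 0 + s 1 + s 2 + s 3).choose (s 1 + s 3) * (s 1 + s 3).factorial
        * (s 0 + s 2).factorial
      = (s 0 + s 1 + s 2 + s 3).factorial := by
    have hle : s 1 + s 3 ≤ s 0 + s 1 + s 2 + s 3 := by omega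
    have := Nat.choose_mul_factorial_mul_factorial hle
    have heq : s 0 + s 1 + s 2 + s 3 - (s 1 + s 3) = s 0 + s 2 := by omega
    rwa [heq] at this
  have hpos : 0 < (s 0).factorial * ((s 1).factorial * ((s 2).factorial * (s 3).factorial)) :=
    Nat.mul_pos (Nat.factorial_pos _) (Nat.mul_pos (Nat.factorial_pos _)
      (Nat.mul_pos (Nat.factorial_pos _) (Nat.factorial_pos _)))
  apply Nat.eq_of_mul_eq_mul_left hpos
  calc (s 0).factorial * ((s 1).factorial * ((s 2).factorial * (s 3).factorial))
        * Nat.multinomial univ s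
      = (s 0).factorial * (s 1).factorial * (s 2).factorial * (s 3).factorial
        * Nat.multinomial univ s := by ring
    _ = (s 0 + s 1 + s 2 + s 3).factorial := hspec
    _ = (s 0 + s 1 + s 2 + s 3).choose (s 1 + s 3) * (s 1 + s 3).factorial
        * (s 0 + s 2).factorial := h3.symm
    _ = (s 0 + s 1 + s 2 + s 3).choose (s 1 + s 3)
          * ((s 1 + s 3).choose (s 3) * (s 3).factorial * (s 1).factorial)
          * ((s 0 + s 2).choose (s 2) * (s 2).factorial * (s 0).factorial) := by rw [h1, h2]
    _ = (s 0).factorial * ((s 1).factorial * ((s 2).factorial * (s 3).factorial)) *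
          ((s 0 + s 1 + s 2 + s 3).choose (s 1 + s 3) *
          ((s 1 + s 3).choose (s 3) * ((s 0 + s 2).choose (s 2)))) := by ring

def RTL.Omega : Finset ((β → β) × (β → β)) :=
  univ.filter fun p => Function.Surjective p.1 ∧ Function.Surjective p.2 ∧
    ∀ i, p.1 i ≠ i ∧ (p.2 i ≠ i ∧ p.2 i ≠ p.1 i)

def RTL.NSet (T1 T2 : Finset β) : Finset ((β → β) × (β → β)) :=
  univ.filter fun p => ∀ i, (p.1 i ∉ T1 ∧ p.1 i ≠ i) ∧ (p.2 i ∉ T2 ∧ p.2 i ≠ i ∧ p.2 i ≠ p.1 i)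

lemma RTL.sum_missed (f : β → β) :
    ∑ T : Finset β, (-1 : ℤ) ^ T.card * (if ∀ i, f i ∉ T then 1 else 0)
      = if Function.Surjective f then 1 else 0 := by
  classical
  rw [← Finset.powerset_univ]
  rw [← Finset.sum_subset (Finset.powerset_mono.mpr (Finset.subset_univ (univ.image f)ᶜ))
    (by
      intro T _ hT
      rw [Finset.mem_powerset] at hT
      have : ¬ ∀ i, f i ∉ T := by
        intro hall
        exact hT fun x hx => by
          simp only [Finset.mem_compl, Finset.mem_image, mem_univ, true_and]
          rintro ⟨i, rfl⟩
          exact hall i hx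
      rw [if_neg this, mul_zero])]
  have hc : ∀ T ∈ ((univ.image f)ᶜ).powerset,
      (-1 : ℤ) ^ T.card * (if ∀ i, f i ∉ T then 1 else 0) = (-1 : ℤ) ^ T.card := by
    intro T hT
    rw [Finset.mem_powerset] at hT
    rw [if_pos, mul_one]
    intro i hi
    have := hT hi
    simp only [Finset.mem_compl] at this
    exact this (Finset.mem_image_of_mem f (Finset.mem_univ i))
  rw [Finset.sum_congr rfl hc, Finset.sum_powerset_neg_one_pow_card]
  congr 1
  rw [eq_iff_iff]
  constructor
  · intro h y
    have hy : y ∈ univ.image f := by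
      by_contra hy
      have : y ∈ (univ.image f)ᶜ := Finset.mem_compl.mpr hy
      rw [h] at this
      exact absurd this (Finset.notMem_empty y)
    simpa using hy
  · intro hsurj
    rw [Finset.eq_empty_iff_forall_notMem]
    intro y hy
    obtain ⟨x, rfl⟩ := hsurj y
    simp at hy

lemma RTL.incl_excl :
    ((RTL.Omega (β := β)).card : ℤ)
      = ∑ T1 : Finset β, ∑ T2 : Finset β, (-1 : ℤ) ^ (T1.card + T2.card) *
          ((RTL.NSet T1 T2).card : ℤ) := by
  classical
  unfold RTL.Omega RTL.NSet
  set Λ : Finset ((β → β) × (β → β)) :=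
    univ.filter fun p => ∀ i, p.1 i ≠ i ∧ (p.2 i ≠ i ∧ p.2 i ≠ p.1 i) with hΛ
  have cardf : ∀ (q : (β → β) × (β → β) → Prop) [DecidablePred q],
      ((Λ.filter q).card : ℤ) = ∑ p ∈ Λ, if q p then (1 : ℤ) else 0 := by
    intro q _
    rw [Finset.card_filter]
    push_cast
    rfl
  have hN : ∀ T1 T2 : Finset β,
      (univ.filter fun p : (β → β) × (β → β) =>
        ∀ i, (p.1 i ∉ T1 ∧ p.1 i ≠ i) ∧ (p.2 i ∉ T2 ∧ p.2 i ≠ i ∧ p.2 i ≠ p.1 i))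
      = Λ.filter fun p => (∀ i, p.1 i ∉ T1) ∧ (∀ i, p.2 i ∉ T2) := by
    intro T1 T2
    rw [hΛ, Finset.filter_filter]
    apply Finset.filter_congr
    intro p _
    constructor
    · intro h
      exact ⟨fun i => ⟨(h i).1.2, (h i).2.2.1, (h i).2.2.2⟩,
        fun i => (h i).1.1, fun i => (h i).2.1⟩
    · rintro ⟨h1, h2, h3⟩
      exact fun i => ⟨⟨h2 i, (h1 i).1⟩, h3 i, (h1 i).2.1, (h1 i).2.2⟩
  have hΩ : (univ.filter fun p : (β → β) × (β → β) =>
      Function.Surjective p.1 ∧ Function.Surjective p.2 ∧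
        ∀ i, p.1 i ≠ i ∧ (p.2 i ≠ i ∧ p.2 i ≠ p.1 i))
      = Λ.filter fun p => Function.Surjective p.1 ∧ Function.Surjective p.2 := by
    rw [hΛ, Finset.filter_filter]
    apply Finset.filter_congr
    intro p _
    constructor
    · rintro ⟨h1, h2, h3⟩; exact ⟨h3, h1, h2⟩
    · rintro ⟨h3, h1, h2⟩; exact ⟨h1, h2, h3⟩
  calc ((univ.filter fun p : (β → β) × (β → β) =>
      Function.Surjective p.1 ∧ Function.Surjective p.2 ∧
        ∀ i, p.1 i ≠ i ∧ (p.2 i ≠ i ∧ p.2 i ≠ p.1 i)).card : ℤ)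
      = ∑ p ∈ Λ, (if Function.Surjective p.1 then (1 : ℤ) else 0) *
          (if Function.Surjective p.2 then (1 : ℤ) else 0) := by
        rw [hΩ, cardf]
        apply Finset.sum_congr rfl
        intro p _
        by_cases h1 : Function.Surjective p.1 <;> by_cases h2 : Function.Surjective p.2 <;>
          simp [h1, h2]
    _ = ∑ p ∈ Λ, (∑ T1 : Finset β, (-1 : ℤ) ^ T1.card * (if ∀ i, p.1 i ∉ T1 then 1 else 0)) *
          (∑ T2 : Finset β, (-1 : ℤ) ^ T2.card * (if ∀ i, p.2 i ∉ T2 then 1 else 0)) := by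
        apply Finset.sum_congr rfl
        intro p _
        rw [RTL.sum_missed, RTL.sum_missed]
    _ = ∑ p ∈ Λ, ∑ T1 : Finset β, ∑ T2 : Finset β,
          ((-1 : ℤ) ^ T1.card * (if ∀ i, p.1 i ∉ T1 then 1 else 0)) *
          ((-1 : ℤ) ^ T2.card * (if ∀ i, p.2 i ∉ T2 then 1 else 0)) := by
        apply Finset.sum_congr rfl
        intro p _
        rw [Finset.sum_mul_sum]
    _ = ∑ T1 : Finset β, ∑ T2 : Finset β, ∑ p ∈ Λ,
          ((-1 : ℤ) ^ T1.card * (if ∀ i, p.1 i ∉ T1 then 1 else 0)) *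
          ((-1 : ℤ) ^ T2.card * (if ∀ i, p.2 i ∉ T2 then 1 else 0)) := by
        rw [Finset.sum_comm]
        apply Finset.sum_congr rfl
        intro T1 _
        rw [Finset.sum_comm]
    _ = ∑ T1 : Finset β, ∑ T2 : Finset β, (-1 : ℤ) ^ (T1.card + T2.card) *
          ((univ.filter fun p : (β → β) × (β → β) =>
            ∀ i, (p.1 i ∉ T1 ∧ p.1 i ≠ i) ∧ (p.2 i ∉ T2 ∧ p.2 i ≠ i ∧ p.2 i ≠ p.1 i)).card : ℤ) := by
        apply Finset.sum_congr rfl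
        intro T1 _
        apply Finset.sum_congr rfl
        intro T2 _
        rw [hN, cardf, Finset.mul_sum]
        apply Finset.sum_congr rfl
        intro p _
        by_cases h1 : ∀ i, p.1 i ∉ T1 <;> by_cases h2 : ∀ i, p.2 i ∉ T2 <;>
          simp [h1, h2, pow_add]

lemma RTL.N_eval (T1 T2 : Finset β) :
    ((RTL.NSet T1 T2).card : ℤ)
      = g ((((T1 ∪ T2)ᶜ).card : ℤ) - 1) ((T1 \ T2).card : ℤ) ((T2 \ T1).card : ℤ)
            (((T1 ∩ T2).card : ℤ) + 1) ^ ((T1 ∪ T2)ᶜ).card *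
        g (((T1 ∪ T2)ᶜ).card : ℤ) (((T1 \ T2).card : ℤ) - 1) ((T2 \ T1).card : ℤ)
            (((T1 ∩ T2).card : ℤ) + 1) ^ (T1 \ T2).card *
        g (((T1 ∪ T2)ᶜ).card : ℤ) ((T1 \ T2).card : ℤ) (((T2 \ T1).card : ℤ) - 1)
            (((T1 ∩ T2).card : ℤ) + 1) ^ (T2 \ T1).card *
        g (((T1 ∪ T2)ᶜ).card : ℤ) ((T1 \ T2).card : ℤ) ((T2 \ T1).card : ℤ)
            ((T1 ∩ T2).card : ℤ) ^ (T1 ∩ T2).card := by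
  classical
  unfold RTL.NSet
  have hpred : ∀ (i : β) (z : β × β),
      ((z.1 ∉ T1 ∧ z.1 ≠ i) ∧ (z.2 ∉ T2 ∧ z.2 ≠ i ∧ z.2 ≠ z.1))
        ↔ (z.1 ∈ T1ᶜ.erase i ∧ z.2 ∈ T2ᶜ.erase i ∧ z.2 ≠ z.1) := by
    intro i z
    simp only [Finset.mem_erase, Finset.mem_compl]
    tauto
  have hstep : (univ.filter fun p : (β → β) × (β → β) =>
        ∀ i, (p.1 i ∉ T1 ∧ p.1 i ≠ i) ∧ (p.2 i ∉ T2 ∧ p.2 i ≠ i ∧ p.2 i ≠ p.1 i)).card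
      = ∏ i, (univ.filter fun z : β × β =>
          z.1 ∈ T1ᶜ.erase i ∧ z.2 ∈ T2ᶜ.erase i ∧ z.2 ≠ z.1).card := by
    rw [RTL.card_pair_fun fun i x y => (x ∉ T1 ∧ x ≠ i) ∧ (y ∉ T2 ∧ y ≠ i ∧ y ≠ x)]
    exact Finset.prod_congr rfl fun i _ =>
      congrArg Finset.card (Finset.filter_congr fun z _ => hpred i z)
  rw [hstep]
  push_cast
  have hfact : ∀ i : β, ((univ.filter fun z : β × β =>
        z.1 ∈ T1ᶜ.erase i ∧ z.2 ∈ T2ᶜ.erase i ∧ z.2 ≠ z.1).card : ℤ)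
      = ((T1ᶜ.erase i).card : ℤ) * ((T2ᶜ.erase i).card : ℤ)
          - ((((T1 ∪ T2)ᶜ).erase i).card : ℤ) := by
    intro i
    have hinter : (T1ᶜ.erase i) ∩ (T2ᶜ.erase i) = ((T1 ∪ T2)ᶜ).erase i := by
      ext x
      simp only [Finset.mem_inter, Finset.mem_erase, Finset.mem_compl, Finset.mem_union]
      tauto
    rw [RTL.card_pairs, Nat.cast_sub (RTL.inter_card_le_mul _ _), Nat.cast_mul, hinter]
  have hcA : (T1ᶜ.card : ℤ) = ((T1 ∪ T2)ᶜ).card + (T2 \ T1).card := by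
    have heq : T1ᶜ = (T1 ∪ T2)ᶜ ∪ (T2 \ T1) := by
      ext x
      simp only [Finset.mem_compl, Finset.mem_union, Finset.mem_sdiff]
      tauto
    rw [heq, Finset.card_union_of_disjoint]
    · push_cast; ring
    · rw [Finset.disjoint_left]
      intro x hx
      simp only [Finset.mem_compl, Finset.mem_union] at hx
      simp only [Finset.mem_sdiff]
      tauto
  have hcB : (T2ᶜ.card : ℤ) = ((T1 ∪ T2)ᶜ).card + (T1 \ T2).card := by
    have heq : T2ᶜ = (T1 ∪ T2)ᶜ ∪ (T1 \ T2) := by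
      ext x
      simp only [Finset.mem_compl, Finset.mem_union, Finset.mem_sdiff]
      tauto
    rw [heq, Finset.card_union_of_disjoint]
    · push_cast; ring
    · rw [Finset.disjoint_left]
      intro x hx
      simp only [Finset.mem_compl, Finset.mem_union] at hx
      simp only [Finset.mem_sdiff]
      tauto
  have huniv : (univ : Finset β)
      = (T1 ∪ T2)ᶜ ∪ ((T1 \ T2) ∪ ((T2 \ T1) ∪ (T1 ∩ T2))) := by
    ext x
    simp only [Finset.mem_univ, Finset.mem_union, Finset.mem_compl, Finset.mem_sdiff,
      Finset.mem_inter, true_iff]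
    tauto
  have d0 : Disjoint ((T1 ∪ T2)ᶜ) ((T1 \ T2) ∪ ((T2 \ T1) ∪ (T1 ∩ T2))) := by
    rw [Finset.disjoint_left]
    intro x hx
    simp only [Finset.mem_compl, Finset.mem_union] at hx
    simp only [Finset.mem_union, Finset.mem_sdiff, Finset.mem_inter]
    tauto
  have d1 : Disjoint (T1 \ T2) ((T2 \ T1) ∪ (T1 ∩ T2)) := by
    rw [Finset.disjoint_left]
    intro x hx
    simp only [Finset.mem_sdiff] at hx
    simp only [Finset.mem_union, Finset.mem_sdiff, Finset.mem_inter]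
    tauto
  have d2 : Disjoint (T2 \ T1) (T1 ∩ T2) := by
    rw [Finset.disjoint_left]
    intro x hx
    simp only [Finset.mem_sdiff] at hx
    simp only [Finset.mem_inter]
    tauto
  calc (∏ i : β, ((univ.filter fun z : β × β =>
        z.1 ∈ T1ᶜ.erase i ∧ z.2 ∈ T2ᶜ.erase i ∧ z.2 ≠ z.1).card : ℤ))
      = ∏ i ∈ (T1 ∪ T2)ᶜ ∪ ((T1 \ T2) ∪ ((T2 \ T1) ∪ (T1 ∩ T2))),
          ((univ.filter fun z : β × β =>
            z.1 ∈ T1ᶜ.erase i ∧ z.2 ∈ T2ᶜ.erase i ∧ z.2 ≠ z.1).card : ℤ) := by rw [← huniv]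
    _ = _ := by
      rw [Finset.prod_union d0, Finset.prod_union d1, Finset.prod_union d2]
      have e0 : ∀ i ∈ (T1 ∪ T2)ᶜ, ((univ.filter fun z : β × β =>
          z.1 ∈ T1ᶜ.erase i ∧ z.2 ∈ T2ᶜ.erase i ∧ z.2 ≠ z.1).card : ℤ)
          = g ((((T1 ∪ T2)ᶜ).card : ℤ) - 1) ((T1 \ T2).card : ℤ) ((T2 \ T1).card : ℤ)
              (((T1 ∩ T2).card : ℤ) + 1) := by
        intro i hi
        have hi' : i ∉ T1 ∧ i ∉ T2 := by
          simpa [Finset.mem_compl, Finset.mem_union] using hi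
        rw [hfact, Finset.cast_card_erase_of_mem (by simp [Finset.mem_compl, hi'.1]),
          Finset.cast_card_erase_of_mem (by simp [Finset.mem_compl, hi'.2]),
          Finset.cast_card_erase_of_mem hi, hcA, hcB]
        simp only [g]
        ring
      have e1 : ∀ i ∈ T1 \ T2, ((univ.filter fun z : β × β =>
          z.1 ∈ T1ᶜ.erase i ∧ z.2 ∈ T2ᶜ.erase i ∧ z.2 ≠ z.1).card : ℤ)
          = g (((T1 ∪ T2)ᶜ).card : ℤ) (((T1 \ T2).card : ℤ) - 1) ((T2 \ T1).card : ℤ)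
              (((T1 ∩ T2).card : ℤ) + 1) := by
        intro i hi
        rw [Finset.mem_sdiff] at hi
        rw [hfact, Finset.erase_eq_of_notMem (by simp [Finset.mem_compl, hi.1]),
          Finset.cast_card_erase_of_mem (by simp [Finset.mem_compl, hi.2]),
          Finset.erase_eq_of_notMem (by simp [Finset.mem_compl, Finset.mem_union, hi.1]),
          hcA, hcB]
        simp only [g]
        ring
      have e2 : ∀ i ∈ T2 \ T1, ((univ.filter fun z : β × β =>
          z.1 ∈ T1ᶜ.erase i ∧ z.2 ∈ T2ᶜ.erase i ∧ z.2 ≠ z.1).card : ℤ)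
          = g (((T1 ∪ T2)ᶜ).card : ℤ) ((T1 \ T2).card : ℤ) (((T2 \ T1).card : ℤ) - 1)
              (((T1 ∩ T2).card : ℤ) + 1) := by
        intro i hi
        rw [Finset.mem_sdiff] at hi
        rw [hfact, Finset.cast_card_erase_of_mem (by simp [Finset.mem_compl, hi.2]),
          Finset.erase_eq_of_notMem (by simp [Finset.mem_compl, hi.1]),
          Finset.erase_eq_of_notMem (by simp [Finset.mem_compl, Finset.mem_union, hi.1]),
          hcA, hcB]
        simp only [g]
        ring
      have e3 : ∀ i ∈ T1 ∩ T2, ((univ.filter fun z : β × β =>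
          z.1 ∈ T1ᶜ.erase i ∧ z.2 ∈ T2ᶜ.erase i ∧ z.2 ≠ z.1).card : ℤ)
          = g (((T1 ∪ T2)ᶜ).card : ℤ) ((T1 \ T2).card : ℤ) ((T2 \ T1).card : ℤ)
              ((T1 ∩ T2).card : ℤ) := by
        intro i hi
        rw [Finset.mem_inter] at hi
        rw [hfact, Finset.erase_eq_of_notMem (by simp [Finset.mem_compl, hi.1]),
          Finset.erase_eq_of_notMem (by simp [Finset.mem_compl, hi.2]),
          Finset.erase_eq_of_notMem (by simp [Finset.mem_compl, Finset.mem_union, hi.1]),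
          hcA, hcB]
        simp only [g]
        ring
      rw [Finset.prod_congr rfl e0, Finset.prod_congr rfl e1, Finset.prod_congr rfl e2,
        Finset.prod_congr rfl e3, Finset.prod_const, Finset.prod_const, Finset.prod_const,
        Finset.prod_const]
      ring

def RTL.kappa (x : Finset β × Finset β) : Fin 4 → ℕ :=
  ![((x.1 ∪ x.2)ᶜ).card, (x.1 \ x.2).card, (x.2 \ x.1).card, (x.1 ∩ x.2).card]

def RTL.G4 (s : Fin 4 → ℕ) : ℤ :=
  (-1 : ℤ) ^ (s 1 + s 2 + 2 * s 3) *
    g ((s 0 : ℤ) - 1) (s 1) (s 2) ((s 3 : ℤ) + 1) ^ (s 0) *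
    g (s 0) ((s 1 : ℤ) - 1) (s 2) ((s 3 : ℤ) + 1) ^ (s 1) *
    g (s 0) (s 1) ((s 2 : ℤ) - 1) ((s 3 : ℤ) + 1) ^ (s 2) *
    g (s 0) (s 1) (s 2) (s 3) ^ (s 3)

end Helpers

lemma RTL.latin_card (n : ℕ) :
    Nat.card {A : Fin 3 → Fin n → Fin n // IsLatin A ∧ ∀ j, A 0 j = j}
      = (RTL.Omega (β := Fin n)).card := by
  classical
  rw [← Nat.card_eq_finsetCard]
  apply Nat.card_congr
  refine ⟨fun A => ⟨(A.1 1, A.1 2), ?_⟩,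
    fun p => ⟨fun k => if k = 0 then (fun j => j) else if k = 1 then p.1.1 else p.1.2, ?_⟩, ?_, ?_⟩
  · obtain ⟨A, ⟨hrow, hcol⟩, h0⟩ := A
    simp only [RTL.Omega, Finset.mem_filter, Finset.mem_univ, true_and]
    refine ⟨Finite.injective_iff_surjective.mp (hrow 1),
            Finite.injective_iff_surjective.mp (hrow 2), fun j => ?_⟩
    have h10 : A 1 j ≠ A 0 j := (hcol j).ne (by decide)
    have h20 : A 2 j ≠ A 0 j := (hcol j).ne (by decide)
    have h21 : A 2 j ≠ A 1 j := (hcol j).ne (by decide)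
    rw [h0 j] at h10 h20
    exact ⟨h10, h20, h21⟩
  · obtain ⟨⟨f, g⟩, hp⟩ := p
    simp only [RTL.Omega, Finset.mem_filter, Finset.mem_univ, true_and] at hp
    obtain ⟨hf, hg, hloc⟩ := hp
    refine ⟨⟨fun k => ?_, fun j => ?_⟩, fun j => by simp⟩
    · fin_cases k
      · exact fun _ _ h => by simpa using h
      · simpa using Finite.injective_iff_surjective.mpr hf
      · simpa using Finite.injective_iff_surjective.mpr hg
    · intro a b hab
      fin_cases a <;> fin_cases b <;> simp_all <;>
        first
          | rfl
          | (exact absurd hab.symm (hloc j).1)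
          | (exact absurd hab (hloc j).1)
          | (exact absurd hab.symm (hloc j).2.1)
          | (exact absurd hab (hloc j).2.1)
          | (exact absurd hab.symm (hloc j).2.2)
          | (exact absurd hab (hloc j).2.2)
  · rintro ⟨A, ⟨hrow, hcol⟩, h0⟩
    ext k j
    simp only
    split
    · next h => subst h; exact congrArg Fin.val (h0 j).symm
    · next h =>
        split
        · next h1 => subst h1; rfl
        · next h1 =>
            have : k = 2 := by omega
            subst this; rfl
  · rintro ⟨⟨f, g⟩, hp⟩
    simp

theorem reduced_three_line_formula (n : ℕ) :
    (Nat.card {A : Fin 3 → Fin n → Fin n // IsLatin A ∧ ∀ j, A 0 j = j} : ℤ) =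
      ∑ s ∈ Finset.Nat.antidiagonalTuple 4 n,
        (-1 : ℤ) ^ (s 1 + s 2 + 2 * s 3) *
          (Nat.multinomial Finset.univ s : ℤ) *
          g ((s 0 : ℤ) - 1) (s 1) (s 2) ((s 3 : ℤ) + 1) ^ (s 0) *
          g (s 0) ((s 1 : ℤ) - 1) (s 2) ((s 3 : ℤ) + 1) ^ (s 1) *
          g (s 0) (s 1) ((s 2 : ℤ) - 1) ((s 3 : ℤ) + 1) ^ (s 2) *
          g (s 0) (s 1) (s 2) (s 3) ^ (s 3) := by
  classical
  rw [RTL.latin_card n]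
  refine Eq.trans (RTL.incl_excl (β := Fin n)) ?_
  have hcards : ∀ T1 T2 : Finset (Fin n),
      ((T1 ∪ T2)ᶜ).card + (T1 \ T2).card + (T2 \ T1).card + (T1 ∩ T2).card = n
      ∧ T1.card = (T1 \ T2).card + (T1 ∩ T2).card
      ∧ T2.card = (T2 \ T1).card + (T1 ∩ T2).card := by
    intro T1 T2
    have h1 := Finset.card_sdiff_add_card_inter T1 T2
    have h2 := Finset.card_sdiff_add_card_inter T2 T1
    have h3 := Finset.card_union_add_card_inter T1 T2
    have h4 : ((T1 ∪ T2)ᶜ).card = Fintype.card (Fin n) - (T1 ∪ T2).card :=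
      Finset.card_compl _
    have h5 : (T1 ∪ T2).card ≤ Fintype.card (Fin n) := Finset.card_le_univ _
    rw [Finset.inter_comm T2 T1] at h2
    rw [Fintype.card_fin] at h4 h5
    omega
  have hterm : ∀ T1 T2 : Finset (Fin n),
      (-1 : ℤ) ^ (T1.card + T2.card) * ((RTL.NSet T1 T2).card : ℤ)
      = RTL.G4 (RTL.kappa (T1, T2)) := by
    intro T1 T2
    rw [RTL.N_eval]
    have hsign : T1.card + T2.card
        = (T1 \ T2).card + (T2 \ T1).card + 2 * (T1 ∩ T2).card := by
      have h := hcards T1 T2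
      omega
    rw [hsign]
    simp only [RTL.G4, RTL.kappa, Matrix.cons_val_zero, Matrix.cons_val_one, Matrix.head_cons,
      Matrix.cons_val_two, Matrix.cons_val_three, Matrix.tail_cons, Matrix.head_fin_const]
    ring
  have hmaps : ∀ x : Finset (Fin n) × Finset (Fin n), x ∈ (univ : Finset _) →
      RTL.kappa x ∈ Finset.Nat.antidiagonalTuple 4 n := by
    intro x _
    rw [Finset.Nat.mem_antidiagonalTuple, Fin.sum_univ_four]
    simp only [RTL.kappa, Matrix.cons_val_zero, Matrix.cons_val_one, Matrix.head_cons,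
      Matrix.cons_val_two, Matrix.cons_val_three, Matrix.tail_cons, Matrix.head_fin_const]
    exact (hcards x.1 x.2).1
  have hfiber : ∀ y ∈ Finset.Nat.antidiagonalTuple 4 n,
      ((univ : Finset (Finset (Fin n) × Finset (Fin n))).filter
          fun x => RTL.kappa x = y).card
        = Nat.multinomial Finset.univ y := by
    intro y hy
    rw [Finset.Nat.mem_antidiagonalTuple, Fin.sum_univ_four] at hy
    have hfilter : ((univ : Finset (Finset (Fin n) × Finset (Fin n))).filter
          fun x => RTL.kappa x = y)
        = (univ.filter fun x : Finset (Fin n) × Finset (Fin n) =>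
            (x.1 \ x.2).card = y 1 ∧ (x.2 \ x.1).card = y 2 ∧ (x.1 ∩ x.2).card = y 3) := by
      apply Finset.filter_congr
      intro x _
      constructor
      · intro h
        refine ⟨?_, ?_, ?_⟩
        · have := congrFun h 1
          simpa [RTL.kappa] using this
        · have := congrFun h 2
          simpa [RTL.kappa] using this
        · have := congrFun h 3
          simpa [RTL.kappa] using this
      · rintro ⟨h1, h2, h3⟩
        have h0 : ((x.1 ∪ x.2)ᶜ).card = y 0 := by
          have := hcards x.1 x.2
          omega
        have h0' : (x.1ᶜ ∩ x.2ᶜ).card = y 0 := by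
          rw [← Finset.compl_union]; exact h0
        funext i
        fin_cases i <;> simp [RTL.kappa, h0, h0', h1, h2, h3]
    rw [hfilter, RTL.fiber_count, RTL.mult_eq_choose, Fintype.card_fin]
    have e1 : n - (y 1 + y 3) = y 0 + y 2 := by omega
    have e2 : n = y 0 + y 1 + y 2 + y 3 := by omega
    rw [e1, e2]
  calc (∑ T1 : Finset (Fin n), ∑ T2 : Finset (Fin n), (-1 : ℤ) ^ (T1.card + T2.card) *
        ((RTL.NSet T1 T2).card : ℤ))
      = ∑ x : Finset (Fin n) × Finset (Fin n), RTL.G4 (RTL.kappa x) := by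
        rw [Fintype.sum_prod_type]
        exact Finset.sum_congr rfl fun T1 _ => Finset.sum_congr rfl fun T2 _ => hterm T1 T2
    _ = ∑ y ∈ Finset.Nat.antidiagonalTuple 4 n,
          ∑ x ∈ (univ : Finset (Finset (Fin n) × Finset (Fin n))).filter
            (fun x => RTL.kappa x = y), RTL.G4 (RTL.kappa x) := by
        rw [Finset.sum_fiberwise_of_maps_to hmaps]
    _ = ∑ y ∈ Finset.Nat.antidiagonalTuple 4 n,
          (Nat.multinomial Finset.univ y : ℤ) * RTL.G4 y := by
        apply Finset.sum_congr rfl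
        intro y hy
        have : ∀ x ∈ (univ : Finset (Finset (Fin n) × Finset (Fin n))).filter
            (fun x => RTL.kappa x = y), RTL.G4 (RTL.kappa x) = RTL.G4 y := by
          intro x hx
          rw [Finset.mem_filter] at hx
          rw [hx.2]
        rw [Finset.sum_congr rfl this, Finset.sum_const, hfiber y hy, nsmul_eq_mul]
    _ = _ := by
        apply Finset.sum_congr rfl
        intro y _
        simp only [RTL.G4]
        ring
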